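/- (Limit behaviour in the order) Let N ≥ 1 be a natural number and let c ∈ ℝ^N be a vector with strictly positive coefficients sorted in ascending order 0 < c_1 ≤ c_2 ≤ … ≤ c_N. Then the Generalised Differential Sparsity of c tends to 0 as the order tends to infinity: lim_{p → +∞} S_p(c) = 0. -/

import Mathlib

open Finset

/-- Generalised Differential Sparsity of order `p` (sorted coefficients). -/
noncomputable def gds (N : ℕ) (p : ℝ) (c : Fin N → ℝ) : ℝ :=
  (1 / (N * ∑ i, c i ^ p)) *
    ∑ i : Fin N, ∑ j : Fin N, if i < j then (c j - c i) ^ p else 0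

theorem gds_tendsto_zero (N : ℕ) (hN : 1 ≤ N)
    (c : Fin N → ℝ) (hc0 : ∀ i, 0 < c i) (hmono : Monotone c) :
    Filter.Tendsto (fun p : ℝ => gds N p c) Filter.atTop (nhds 0) := by
  have hN0 : 0 < N := hN
  set lo : Fin N := ⟨0, hN0⟩ with hlo_def
  set hi : Fin N := ⟨N - 1, Nat.sub_lt hN0 one_pos⟩ with hhi_def
  have hle_hi : ∀ i : Fin N, c i ≤ c hi := fun i =>
    hmono (Fin.le_def.mpr (Nat.le_pred_of_lt i.isLt))
  have hlo_le : ∀ i : Fin N, c lo ≤ c i := fun i =>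
    hmono (Fin.le_def.mpr (Nat.zero_le _))
  set r : ℝ := (c hi - c lo) / c hi with hr_def
  have hD0 : 0 ≤ c hi - c lo := sub_nonneg.mpr (hlo_le hi)
  have hr0 : 0 ≤ r := div_nonneg hD0 (hc0 hi).le
  have hr1 : r < 1 := (div_lt_one (hc0 hi)).mpr (sub_lt_self _ (hc0 lo))
  have hlim : Filter.Tendsto (fun p : ℝ => (N : ℝ) * r ^ p) Filter.atTop (nhds 0) := by
    have := (tendsto_rpow_atTop_of_base_lt_one r (by linarith) hr1).const_mul (N : ℝ)
    simpa using this
  refine tendsto_of_tendsto_of_tendsto_of_le_of_le' tendsto_const_nhds hlim ?_ ?_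
  · -- lower bound : 0 ≤ gds
    refine Filter.Eventually.of_forall fun p => ?_
    unfold gds
    have hS : 0 ≤ ∑ i, c i ^ p :=
      Finset.sum_nonneg fun i _ => (Real.rpow_nonneg (hc0 i).le p)
    refine mul_nonneg (by positivity) ?_
    refine Finset.sum_nonneg fun i _ => Finset.sum_nonneg fun j _ => ?_
    split_ifs with h
    · exact Real.rpow_nonneg (sub_nonneg.mpr (hmono h.le)) p
    · exact le_refl 0
  · -- upper bound eventually
    filter_upwards [Filter.eventually_ge_atTop (0 : ℝ)] with p hp
    unfold gds
    set S : ℝ := ∑ i, c i ^ p with hS_def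
    have hShi : c hi ^ p ≤ S :=
      Finset.single_le_sum (fun i _ => Real.rpow_nonneg (hc0 i).le p) (mem_univ hi)
    have hhip : 0 < c hi ^ p := Real.rpow_pos_of_pos (hc0 hi) p
    have hSpos : 0 < S := lt_of_lt_of_le hhip hShi
    set D : ℝ := c hi - c lo with hD_def
    have hT : (∑ i : Fin N, ∑ j : Fin N, if i < j then (c j - c i) ^ p else 0)
        ≤ (N : ℝ) * N * D ^ p := by
      calc (∑ i : Fin N, ∑ j : Fin N, if i < j then (c j - c i) ^ p else 0)
          ≤ ∑ _i : Fin N, ∑ _j : Fin N, D ^ p := by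
            refine Finset.sum_le_sum fun i _ => Finset.sum_le_sum fun j _ => ?_
            split_ifs with h
            · exact Real.rpow_le_rpow (sub_nonneg.mpr (hmono h.le))
                (by have := hle_hi j; have := hlo_le i; rw [hD_def]; linarith) hp
            · exact Real.rpow_nonneg hD0 p
        _ = (N : ℝ) * N * D ^ p := by simp [mul_assoc]
    have hDp : 0 ≤ D ^ p := Real.rpow_nonneg hD0 p
    calc (1 / (N * S)) *
          (∑ i : Fin N, ∑ j : Fin N, if i < j then (c j - c i) ^ p else 0)
        ≤ (1 / (N * S)) * ((N : ℝ) * N * D ^ p) := by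
          refine mul_le_mul_of_nonneg_left hT (by positivity)
      _ = (N : ℝ) * (D ^ p / S) := by
          field_simp
      _ ≤ (N : ℝ) * (D ^ p / c hi ^ p) := by gcongr
      _ = (N : ℝ) * r ^ p := by
          rw [hr_def, Real.div_rpow hD0 (hc0 hi).le]
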